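/- For the threshold graphon W(x,y)=1_{⟨x,y⟩≥τ} with X ~ F_ν, P(d_W(X) = 0) = F_Beta(τ^2), where F_Beta is the CDF of Beta(d/2, ν+1/2). -/

import Mathlib

open MeasureTheory Real
open scoped RealInnerProductSpace
open scoped ENNReal

/-- The probability measure `F_ν` on the unit ball of `ℝ^d` with density
proportional to `(1 - ‖x‖²)^(ν - 1/2)` with respect to Lebesgue measure. -/
noncomputable def Fnu (d : ℕ) (ν : ℝ) : Measure (EuclideanSpace ℝ (Fin d)) :=
  letI base : Measure (EuclideanSpace ℝ (Fin d)) :=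
    (volume.restrict (Metric.closedBall 0 1)).withDensity
      (fun x => ENNReal.ofReal ((1 - ‖x‖ ^ 2) ^ (ν - 1 / 2)))
  (base Set.univ)⁻¹ • base

/-- The degree function of the threshold graphon `W(x,y) = 1_{⟨x,y⟩ ≥ τ}`
on the unit ball, with latent measure `F_ν`. -/
noncomputable def degW (d : ℕ) (ν τ : ℝ) (x : EuclideanSpace ℝ (Fin d)) : ℝ :=
  (Fnu d ν {y | τ ≤ ⟪x, y⟫}).toReal

/-- The regularized incomplete Beta function
`I(x; a, b) = (1/B(a,b)) ∫_0^x t^(a-1) (1-t)^(b-1) dt`. -/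
noncomputable def regIncBeta (x a b : ℝ) : ℝ :=
  (∫ t in (0 : ℝ)..x, t ^ (a - 1) * (1 - t) ^ (b - 1)) * Real.Gamma (a + b) /
    (Real.Gamma a * Real.Gamma b)

lemma realBeta (a b : ℝ) (ha : 0 < a) (hb : 0 < b) :
    ∫ t in (0:ℝ)..1, t ^ (a-1) * (1-t) ^ (b-1) = Real.Gamma a * Real.Gamma b / Real.Gamma (a+b) := by
  have h := Complex.Gamma_mul_Gamma_eq_betaIntegral (s := a) (t := b) (by simpa using ha) (by simpa using hb)
  have hbeta : Complex.betaIntegral a b = ((∫ t in (0:ℝ)..1, t ^ (a-1) * (1-t) ^ (b-1) : ℝ) : ℂ) := by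
    rw [Complex.betaIntegral, ← intervalIntegral.integral_ofReal]
    refine intervalIntegral.integral_congr fun x hx => ?_
    rw [Set.uIcc_of_le zero_le_one] at hx
    rw [Complex.ofReal_mul, Complex.ofReal_cpow hx.1, Complex.ofReal_cpow (by linarith [hx.2])]
    push_cast
    ring
  rw [hbeta, ← Complex.ofReal_add, Complex.Gamma_ofReal, Complex.Gamma_ofReal,
    Complex.Gamma_ofReal, ← Complex.ofReal_mul, ← Complex.ofReal_mul] at h
  have h2 := Complex.ofReal_injective h
  have hG : Real.Gamma (a+b) ≠ 0 := (Real.Gamma_pos_of_pos (by linarith)).ne'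
  field_simp
  linarith [h2]

open Set in
lemma substSq (d : ℕ) (hd : 0 < d) (β r : ℝ) (hr : 0 < r) :
    ∫ s in (0:ℝ)..r, (s ^ (d-1) : ℝ) * (1 - s^2) ^ β
      = (1/2) * ∫ t in (0:ℝ)..r^2, t ^ ((d:ℝ)/2 - 1) * (1-t) ^ β := by
  have himg : (fun s : ℝ => s^2) '' Set.Ioo 0 r = Set.Ioo 0 (r^2) := by
    ext t
    constructor
    · rintro ⟨s, ⟨hs0, hsr⟩, rfl⟩
      exact ⟨by positivity, by simpa using pow_lt_pow_left₀ hsr hs0.le two_ne_zero⟩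
    · rintro ⟨ht0, htr⟩
      refine ⟨Real.sqrt t, ⟨Real.sqrt_pos.2 ht0, ?_⟩, Real.sq_sqrt ht0.le⟩
      have := Real.sqrt_lt_sqrt ht0.le htr
      rwa [Real.sqrt_sq hr.le] at this
  have hderiv : ∀ s ∈ Set.Ioo (0:ℝ) r, HasDerivWithinAt (fun s : ℝ => s^2) (2*s) (Set.Ioo 0 r) s := by
    intro s _
    simpa using (hasDerivAt_pow 2 s).hasDerivWithinAt
  have hinj : Set.InjOn (fun s : ℝ => s^2) (Set.Ioo 0 r) := by
    intro a ha b hb h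
    simp only at h
    nlinarith [ha.1, hb.1]
  have key := integral_image_eq_integral_abs_deriv_smul measurableSet_Ioo hderiv hinj
    (fun t => t ^ ((d:ℝ)/2 - 1) * (1-t) ^ β)
  rw [himg] at key
  rw [intervalIntegral.integral_of_le hr.le, intervalIntegral.integral_of_le (by positivity : (0:ℝ) ≤ r^2),
    MeasureTheory.integral_Ioc_eq_integral_Ioo, MeasureTheory.integral_Ioc_eq_integral_Ioo,
    key, ← MeasureTheory.integral_const_mul]
  refine setIntegral_congr_fun measurableSet_Ioo fun s hs => ?_
  have hs0 : (0:ℝ) < s := hs.1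
  have h1 : ((s^2 : ℝ)) ^ ((d:ℝ)/2 - 1) = s ^ ((d:ℝ) - 2) := by
    rw [← Real.rpow_natCast s 2, ← Real.rpow_mul hs0.le]
    norm_num
    ring_nf
  have h2 : (s ^ (d-1) : ℝ) = s ^ ((d:ℝ) - 1) := by
    rw [← Real.rpow_natCast s (d-1)]
    congr 1
    push_cast [Nat.cast_sub hd]
    ring
  rw [smul_eq_mul, abs_of_pos (by linarith), h1, h2]
  have h3 : s ^ ((d:ℝ) - 1) = s * s ^ ((d:ℝ) - 2) := by
    rw [show (d:ℝ)-1 = 1 + ((d:ℝ)-2) by ring, Real.rpow_add hs0, Real.rpow_one]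
  rw [h3]
  ring

open Metric in
lemma ballIntegral (d : ℕ) (hd : 0 < d) (β r : ℝ) (hr0 : 0 < r) :
    ∫ x in Metric.closedBall (0 : EuclideanSpace ℝ (Fin d)) r, (1 - ‖x‖^2) ^ β
      = (d * (volume (Metric.ball (0 : EuclideanSpace ℝ (Fin d)) 1)).toReal) *
        ((1/2) * ∫ t in (0:ℝ)..r^2, t ^ ((d:ℝ)/2 - 1) * (1-t) ^ β) := by
  set E := EuclideanSpace ℝ (Fin d)
  haveI : Nonempty (Fin d) := ⟨⟨0, hd⟩⟩
  haveI : Nontrivial E := inferInstance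
  set f : ℝ → ℝ := Set.indicator (Set.Icc (0:ℝ) r) (fun s => (1-s^2)^β) with hf
  have h := MeasureTheory.integral_fun_norm_addHaar (volume : Measure E) f
  have hdim : Module.finrank ℝ E = d := finrank_euclideanSpace_fin
  rw [hdim] at h
  have hL : ∫ x : E, f ‖x‖ = ∫ x in Metric.closedBall (0:E) r, (1 - ‖x‖^2) ^ β := by
    rw [← MeasureTheory.integral_indicator (measurableSet_closedBall)]
    refine integral_congr_ae (Filter.Eventually.of_forall fun x => ?_)
    have : ‖x‖ ∈ Set.Icc (0:ℝ) r ↔ x ∈ Metric.closedBall (0:E) r := by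
      rw [Set.mem_Icc, mem_closedBall_zero_iff]
      exact ⟨fun h => h.2, fun h => ⟨norm_nonneg _, h⟩⟩
    rw [hf]
    show (Set.Icc (0:ℝ) r).indicator (fun s => (1-s^2)^β) ‖x‖ = _
    by_cases hx : x ∈ Metric.closedBall (0:E) r
    · rw [Set.indicator_of_mem (this.2 hx), Set.indicator_of_mem hx]
    · rw [Set.indicator_of_notMem (fun h => hx (this.1 h)), Set.indicator_of_notMem hx]
  have hR : ∫ y in Set.Ioi (0:ℝ), y ^ (d-1) • f y
      = ∫ s in (0:ℝ)..r, (s ^ (d-1) : ℝ) * (1 - s^2) ^ β := by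
    have : ∀ y : ℝ, y ^ (d-1) • f y
        = Set.indicator (Set.Icc (0:ℝ) r) (fun s => (s ^ (d-1) : ℝ) * (1-s^2)^β) y := by
      intro y
      rw [hf, Set.indicator_apply, Set.indicator_apply]
      by_cases hy : y ∈ Set.Icc (0:ℝ) r <;> simp [hy]
    simp_rw [this]
    rw [MeasureTheory.setIntegral_indicator measurableSet_Icc,
      show Set.Ioi (0:ℝ) ∩ Set.Icc 0 r = Set.Ioc 0 r by
        ext y; simp only [Set.mem_inter_iff, Set.mem_Ioi, Set.mem_Icc, Set.mem_Ioc]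
        exact ⟨fun ⟨h1, _, h3⟩ => ⟨h1, h3⟩, fun ⟨h1, h2⟩ => ⟨h1, h1.le, h2⟩⟩,
      intervalIntegral.integral_of_le hr0.le]
  rw [hL, hR, substSq d hd β r hr0] at h
  rw [h, nsmul_eq_mul, smul_eq_mul, measureReal_def]
  ring

set_option maxHeartbeats 1600000 in
/-- For the threshold graphon on the unit ball with measure `F_ν` and `0 < τ < 1`,
with `X ~ F_ν`: `P(d_W(X) = 0) = F_Beta(τ²)`, where `F_Beta` is the CDF of
`Beta(d/2, ν + 1/2)`. -/
theorem prob_degW_eq_zero (d : ℕ) (hd : 0 < d) (ν τ : ℝ) (hν : -1 / 2 < ν)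
    (hτ0 : 0 < τ) (hτ1 : τ < 1) :
    (Fnu d ν {x | degW d ν τ x = 0}).toReal =
      regIncBeta (τ ^ 2) ((d : ℝ) / 2) (ν + 1 / 2) := by
  set E := EuclideanSpace ℝ (Fin d) with hE
  haveI : Nonempty (Fin d) := ⟨⟨0, hd⟩⟩
  set ρ : E → ℝ := fun x => (1 - ‖x‖ ^ 2) ^ (ν - 1/2) with hρ
  set f : E → ℝ≥0∞ := fun x => ENNReal.ofReal (ρ x) with hfdef
  set base : Measure E :=
    (volume.restrict (Metric.closedBall 0 1)).withDensity f with hbase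
  have hFnu : Fnu d ν = (base Set.univ)⁻¹ • base := rfl
  have hρmeas : Measurable ρ := by fun_prop
  have hfmeas : Measurable f := hρmeas.ennreal_ofReal
  have hBaseApp : ∀ S : Set E, MeasurableSet S →
      base S = ∫⁻ x in S ∩ Metric.closedBall 0 1, f x ∂volume := by
    intro S hS
    rw [hbase, withDensity_apply _ hS, Measure.restrict_restrict hS]
  have hToReal : ∀ S : Set E, MeasurableSet S →
      (base S).toReal = ∫ x in S ∩ Metric.closedBall 0 1, ρ x ∂volume := by
    intro S hS
    rw [hBaseApp S hS]
    rw [MeasureTheory.integral_eq_lintegral_of_nonneg_ae ?_ ?_]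
    · filter_upwards [MeasureTheory.ae_restrict_mem (hS.inter measurableSet_closedBall)] with x hx
      have h1 : ‖x‖ ≤ 1 := by
        simpa [Metric.mem_closedBall, dist_zero_right] using hx.2
      have : ‖x‖ ^ 2 ≤ 1 := pow_le_one₀ (norm_nonneg x) h1
      exact Real.rpow_nonneg (by linarith) _
    · exact hρmeas.aestronglyMeasurable
  -- value of base on closed balls of radius `r ∈ (0, 1]`
  have hval : ∀ r : ℝ, 0 < r → r ≤ 1 →
      (base (Metric.closedBall 0 r)).toReal
        = (d * (volume (Metric.ball (0 : E) 1)).toReal) *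
            ((1/2) * ∫ t in (0:ℝ)..r^2, t ^ ((d:ℝ)/2 - 1) * (1-t) ^ (ν - 1/2)) := by
    intro r hr0 hr1
    rw [hToReal _ measurableSet_closedBall,
      Set.inter_eq_left.2 (Metric.closedBall_subset_closedBall hr1)]
    exact ballIntegral d hd (ν - 1/2) r hr0
  set V := (volume (Metric.ball (0:E) 1)).toReal with hV
  have hVpos : 0 < V :=
    ENNReal.toReal_pos (Metric.measure_ball_pos volume 0 one_pos).ne' measure_ball_lt_top.ne
  have hGa : 0 < Real.Gamma ((d:ℝ)/2) := Real.Gamma_pos_of_pos (by positivity)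
  have hGb : 0 < Real.Gamma (ν + 1/2) := Real.Gamma_pos_of_pos (by linarith)
  have hGab : 0 < Real.Gamma ((d:ℝ)/2 + (ν + 1/2)) := Real.Gamma_pos_of_pos (by
    have : (0:ℝ) < (d:ℝ)/2 := by positivity
    linarith)
  have hint1 : ∫ t in (0:ℝ)..1, t ^ ((d:ℝ)/2 - 1) * (1-t) ^ (ν - 1/2)
      = Real.Gamma ((d:ℝ)/2) * Real.Gamma (ν + 1/2) / Real.Gamma ((d:ℝ)/2 + (ν + 1/2)) := by
    have h := realBeta ((d:ℝ)/2) (ν + 1/2) (by positivity) (by linarith)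
    rw [show ν + 1/2 - 1 = ν - 1/2 by ring] at h
    exact h
  have hBpos : 0 < ∫ t in (0:ℝ)..1, t ^ ((d:ℝ)/2 - 1) * (1-t) ^ (ν - 1/2) := by
    rw [hint1]; positivity
  have huniv : (base Set.univ).toReal
      = (d * V) * ((1/2) * ∫ t in (0:ℝ)..1, t ^ ((d:ℝ)/2 - 1) * (1-t) ^ (ν - 1/2)) := by
    have h1 : base Set.univ = base (Metric.closedBall 0 1) := by
      rw [hBaseApp _ MeasurableSet.univ, hBaseApp _ measurableSet_closedBall,
        Set.univ_inter, Set.inter_self]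
    rw [h1, hval 1 one_pos le_rfl, one_pow]
  have hUpos : 0 < (base Set.univ).toReal := by
    rw [huniv]
    have hd' : (0:ℝ) < d := Nat.cast_pos.2 hd
    positivity
  obtain ⟨hU1, hU2⟩ := ENNReal.toReal_pos_iff.mp hUpos
  have hUne : base Set.univ ≠ 0 := hU1.ne'
  have hUtop : base Set.univ ≠ ⊤ := hU2.ne
  have hFnuTR : ∀ S : Set E, (Fnu d ν S).toReal
      = (base Set.univ).toReal⁻¹ * (base S).toReal := by
    intro S
    rw [hFnu]
    simp [Measure.smul_apply, smul_eq_mul, ENNReal.toReal_mul, ENNReal.toReal_inv]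
  have hinner : ∀ x : E, Continuous fun y : E => (⟪x, y⟫ : ℝ) :=
    fun x => Continuous.inner continuous_const continuous_id
  have hcapmeas : ∀ x : E, MeasurableSet {y : E | τ ≤ ⟪x, y⟫} :=
    fun x => (isClosed_le continuous_const (hinner x)).measurableSet
  have hdegiff : ∀ x : E, (degW d ν τ x = 0 ↔ ‖x‖ ≤ τ) := by
    intro x
    have hcap := hcapmeas x
    have hfin : base {y : E | τ ≤ ⟪x, y⟫} ≠ ⊤ :=
      ((measure_mono (Set.subset_univ _)).trans_lt hU2).ne
    have hdeg : degW d ν τ x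
        = (base Set.univ).toReal⁻¹ * (base {y : E | τ ≤ ⟪x, y⟫}).toReal := hFnuTR _
    constructor
    · intro h0
      by_contra hgt
      push_neg at hgt
      have hx0 : 0 < ‖x‖ := hτ0.trans hgt
      set t : ℝ := (τ/‖x‖ + 1)/2 with ht
      have hfrac : τ/‖x‖ < 1 := (div_lt_one hx0).2 hgt
      have hfrac0 : 0 < τ/‖x‖ := by positivity
      have ht1 : t < 1 := by rw [ht]; linarith
      have ht0 : 0 < t := by rw [ht]; linarith
      have htfrac : τ/‖x‖ < t := by rw [ht]; linarith
      have htτ : τ < t * ‖x‖ := by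
        have := mul_lt_mul_of_pos_right htfrac hx0
        rwa [div_mul_cancel₀ _ hx0.ne'] at this
      set y₀ : E := t • (‖x‖⁻¹ • x) with hy₀
      have hy₀norm : ‖y₀‖ = t := by
        rw [hy₀, norm_smul, norm_smul, norm_inv, norm_norm, Real.norm_eq_abs,
          abs_of_pos ht0, inv_mul_cancel₀ hx0.ne', mul_one]
      have hy₀inner : (⟪x, y₀⟫ : ℝ) = t * ‖x‖ := by
        rw [hy₀, real_inner_smul_right, real_inner_smul_right, real_inner_self_eq_norm_sq]
        field_simp
      set U : Set E := {y : E | τ < ⟪x, y⟫} ∩ Metric.ball (0:E) 1 with hU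
      have hUopen : IsOpen U :=
        (isOpen_lt continuous_const (hinner x)).inter Metric.isOpen_ball
      have hUnonempty : U.Nonempty := by
        refine ⟨y₀, ?_, ?_⟩
        · simpa [Set.mem_setOf_eq, hy₀inner] using htτ
        · rw [Metric.mem_ball, dist_zero_right, hy₀norm]; exact ht1
      have hUvol : volume U ≠ 0 := (hUopen.measure_pos volume hUnonempty).ne'
      have hsub : U ⊆ {y : E | τ ≤ ⟪x, y⟫} ∩ Metric.closedBall 0 1 := by
        rintro y ⟨hy1, hy2⟩
        have hy1' : τ < (⟪x, y⟫ : ℝ) := hy1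
        exact ⟨hy1'.le, Metric.ball_subset_closedBall hy2⟩
      have hne0 : base {y : E | τ ≤ ⟪x, y⟫} ≠ 0 := by
        intro hz
        rw [hBaseApp _ hcap,
          ← withDensity_apply _ (hcap.inter measurableSet_closedBall)] at hz
        have hz2 : (volume.withDensity f) U = 0 := measure_mono_null hsub hz
        rw [withDensity_apply_eq_zero hfmeas] at hz2
        have : {y : E | f y ≠ 0} ∩ U = U := by
          apply Set.inter_eq_right.2
          rintro y ⟨_, hy2⟩
          have hy1 : ‖y‖ < 1 := by rwa [Metric.mem_ball, dist_zero_right] at hy2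
          have hpos : (0:ℝ) < 1 - ‖y‖^2 := by nlinarith [norm_nonneg y]
          have : 0 < ρ y := Real.rpow_pos_of_pos hpos _
          exact (ENNReal.ofReal_pos.2 this).ne'
        rw [this] at hz2
        exact hUvol hz2
      have hcappos : 0 < (base {y : E | τ ≤ ⟪x, y⟫}).toReal :=
        ENNReal.toReal_pos hne0 hfin
      rw [hdeg] at h0
      have := mul_pos (inv_pos.2 hUpos) hcappos
      linarith
    · intro hle
      have hz : base {y : E | τ ≤ ⟪x, y⟫} = 0 := by
        rw [hBaseApp _ hcap]
        have hnull : volume ({y : E | τ ≤ ⟪x, y⟫} ∩ Metric.closedBall (0:E) 1) = 0 := by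
          rcases lt_or_eq_of_le hle with hlt | heq
          · have : {y : E | τ ≤ ⟪x, y⟫} ∩ Metric.closedBall (0:E) 1 = ∅ := by
              rw [Set.eq_empty_iff_forall_notMem]
              rintro y ⟨hy1, hy2⟩
              have hyn : ‖y‖ ≤ 1 := by rwa [Metric.mem_closedBall, dist_zero_right] at hy2
              have hCS := real_inner_le_norm x y
              have : ‖x‖ * ‖y‖ ≤ ‖x‖ := mul_le_of_le_one_right (norm_nonneg x) hyn
              have hy1' : τ ≤ (⟪x, y⟫ : ℝ) := hy1
              linarith
            rw [this, measure_empty]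
          · refine measure_mono_null (fun y hy => ?_) (measure_singleton (τ⁻¹ • x))
            obtain ⟨hy1, hy2⟩ := hy
            have hyn : ‖y‖ ≤ 1 := by rwa [Metric.mem_closedBall, dist_zero_right] at hy2
            have hy1' : τ ≤ (⟪x, y⟫ : ℝ) := hy1
            have hCS := real_inner_le_norm x y
            have h1y : 1 ≤ ‖y‖ := by nlinarith [norm_nonneg y]
            have hynorm : ‖y‖ = 1 := le_antisymm hyn h1y
            have heq2 : (⟪x, y⟫ : ℝ) = ‖x‖ * ‖y‖ := by
              rw [hynorm, mul_one, heq]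
              exact le_antisymm (by nlinarith) hy1'
            have hxy := inner_eq_norm_mul_iff_real.1 heq2
            rw [hynorm, heq, one_smul] at hxy
            show y = τ⁻¹ • x
            rw [hxy, smul_smul, inv_mul_cancel₀ hτ0.ne', one_smul]
        exact setLIntegral_measure_zero _ _ hnull
      rw [hdeg, hz]
      simp
  have hset : {x : E | degW d ν τ x = 0} = Metric.closedBall (0:E) τ := by
    ext x
    simp only [Set.mem_setOf_eq, Metric.mem_closedBall, dist_zero_right]
    exact hdegiff x
  rw [show {x | degW d ν τ x = 0} = Metric.closedBall (0:E) τ from hset,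
    hFnuTR, huniv, hval τ hτ0 hτ1.le]
  rw [regIncBeta, show ν + 1/2 - 1 = ν - 1/2 by ring, hint1]
  have hd' : (0:ℝ) < d := Nat.cast_pos.2 hd
  have hdV : (d:ℝ) * V ≠ 0 := (mul_pos hd' hVpos).ne'
  have hne1 : Real.Gamma ((d:ℝ)/2) ≠ 0 := hGa.ne'
  have hne2 : Real.Gamma (ν + 1/2) ≠ 0 := hGb.ne'
  have hne3 : Real.Gamma ((d:ℝ)/2 + (ν + 1/2)) ≠ 0 := hGab.ne'
  set G1 := Real.Gamma ((d:ℝ)/2) with hG1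
  set G2 := Real.Gamma (ν + 1/2) with hG2
  set G3 := Real.Gamma ((d:ℝ)/2 + (ν + 1/2)) with hG3
  set I := ∫ t in (0:ℝ)..τ^2, t ^ ((d:ℝ)/2 - 1) * (1-t) ^ (ν - 1/2) with hI
  field_simp
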